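/- Let k : ℕ → ℝ with k(j) > 0 for all j. For each j let μ_j be the measure on ℂ with density s ↦ (π·k(j)²)⁻¹·exp(-|s|²/k(j)²) with respect to Lebesgue measure (each μ_j is a probability measure), and let μ be the infinite product probability measure of the μ_j on ℕ → ℂ. For a multi-index I define the monomial z^I : (ℕ → ℂ) → ℂ by z^I(x) = ∏_{j ∈ supp I} x(j)^(I(j)). Then for all multi-indices I, J: ∫ conj(z^I(x)) · z^J(x) dμ(x) = 0 if I ≠ J, and ∫ |z^I(x)|² dμ(x) = I! · ∏_j k(j)^(2·I(j)). -/

import Mathlib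

open MeasureTheory
open scoped Real BigOperators NNReal ENNReal

/-- The factorial `I! = ∏_j (I j)!` of a multi-index. -/
noncomputable def mfact (I : ℕ →₀ ℕ) : ℕ := I.prod fun _ n => n.factorial

/-- The monomial `z^I(x) = ∏_{j ∈ supp I} x(j)^(I j)` on `ℕ → ℂ`. -/
noncomputable def zmon (I : ℕ →₀ ℕ) (x : ℕ → ℂ) : ℂ := ∏ j ∈ I.support, x j ^ I j

noncomputable def gmeasure (kk : ℝ) : Measure ℂ :=
  volume.withDensity fun s =>
    ENNReal.ofReal ((π * kk ^ 2)⁻¹ * Real.exp (-(‖s‖ ^ 2) / kk ^ 2))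

lemma gauss_moment {kk : ℝ} (hkk : 0 < kk) (m n : ℕ) :
    ∫ s, (starRingEnd ℂ) s ^ m * s ^ n ∂(gmeasure kk) =
      if m = n then (((n.factorial : ℝ) * kk ^ (2 * n) : ℝ) : ℂ) else 0 := by
  have hk2 : (0:ℝ) < kk ^ 2 := by positivity
  set c : ℝ := (π * kk ^ 2)⁻¹ with hc
  set b : ℝ := (kk ^ 2)⁻¹ with hbdef
  have hbpos : 0 < b := by positivity
  have hcpos : 0 < c := by
    rw [hc]; positivity
  -- rewrite the density
  have hρ : ∀ s : ℂ, c * Real.exp (-(‖s‖ ^ 2) / kk ^ 2)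
      = c * Real.exp (-b * ‖s‖ ^ 2) := by
    intro s
    rw [hbdef, neg_div, div_eq_inv_mul, neg_mul]
  have hmeas : Measurable fun s : ℂ =>
      Real.toNNReal (c * Real.exp (-(‖s‖ ^ 2) / kk ^ 2)) := by
    have : Continuous fun s : ℂ => c * Real.exp (-(‖s‖ ^ 2) / kk ^ 2) := by
      continuity
    exact this.measurable.real_toNNReal
  have h1 : ∫ s, (starRingEnd ℂ) s ^ m * s ^ n ∂(gmeasure kk)
      = ∫ s : ℂ, ((c * Real.exp (-b * ‖s‖ ^ 2) : ℝ) : ℂ)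
          * ((starRingEnd ℂ) s ^ m * s ^ n) := by
    rw [show gmeasure kk = volume.withDensity fun s : ℂ =>
        ((Real.toNNReal (c * Real.exp (-(‖s‖ ^ 2) / kk ^ 2)) : ℝ≥0) : ℝ≥0∞) from rfl]
    rw [integral_withDensity_eq_integral_smul hmeas]
    congr 1
    ext s
    rw [NNReal.smul_def, Real.coe_toNNReal _ (by positivity), hρ s, Complex.real_smul]
  rw [h1]
  rcases eq_or_ne m n with rfl | hmn
  · rw [if_pos rfl]
    have h2 : ∀ s : ℂ, ((c * Real.exp (-b * ‖s‖ ^ 2) : ℝ) : ℂ)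
        * ((starRingEnd ℂ) s ^ m * s ^ m)
        = ((c * (‖s‖ ^ (2 * m) * Real.exp (-b * ‖s‖ ^ 2)) : ℝ) : ℂ) := by
      intro s
      rw [← mul_pow, show (starRingEnd ℂ) s * s = ((‖s‖ ^ 2 : ℝ) : ℂ) by
        rw [Complex.sq_norm, Complex.normSq_eq_conj_mul_self]]
      rw [← Complex.ofReal_pow, ← pow_mul]
      push_cast
      ring
    simp_rw [h2]
    rw [show (∫ s : ℂ, (((c * (‖s‖ ^ (2 * m) * Real.exp (-b * ‖s‖ ^ 2))):ℝ):ℂ))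
      = ((∫ s : ℂ, c * (‖s‖ ^ (2 * m) * Real.exp (-b * ‖s‖ ^ 2)) : ℝ) : ℂ)
      from integral_ofReal, Complex.ofReal_inj]
    rw [MeasureTheory.integral_const_mul]
    have h3 : ∀ x : ℂ, ‖x‖ ^ (2 * m) * Real.exp (-b * ‖x‖ ^ 2)
        = ‖x‖ ^ ((2 * m : ℕ) : ℝ) * Real.exp (-b * ‖x‖ ^ (2:ℝ)) := by
      intro x
      rw [Real.rpow_natCast, show ((2:ℝ)) = ((2:ℕ) : ℝ) by norm_num, Real.rpow_natCast]
    simp_rw [h3]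
    rw [Complex.integral_rpow_mul_exp_neg_mul_rpow (by norm_num)
      (lt_of_lt_of_le (by norm_num) (Nat.cast_nonneg _)) hbpos]
    have e1 : (((2 * m : ℕ) : ℝ) + 2) / 2 = ((m + 1 : ℕ) : ℝ) := by push_cast; ring
    have e2 : -(((2 * m : ℕ) : ℝ) + 2) / 2 = -(((m + 1 : ℕ) : ℝ)) := by push_cast; ring
    rw [e2, e1, Real.rpow_neg hbpos.le, Real.rpow_natCast,
      show ((m + 1 : ℕ) : ℝ) = (m : ℝ) + 1 by push_cast; ring, Real.Gamma_nat_eq_factorial,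
      hbdef, inv_pow, inv_inv]
    rw [hc, pow_mul]
    have hπ : (0:ℝ) < π := Real.pi_pos
    field_simp
    ring
  · rw [if_neg hmn]
    set F : ℂ → ℂ := fun s => ((c * Real.exp (-b * ‖s‖ ^ 2) : ℝ) : ℂ)
          * ((starRingEnd ℂ) s ^ m * s ^ n) with hF
    show ∫ s, F s = 0
    rw [← Complex.integral_comp_polarCoord_symm F]
    set d : ℂ := (n : ℂ) - (m : ℂ) with hd
    have hdne : d ≠ 0 := by
      rw [hd, sub_ne_zero]
      exact Nat.cast_injective.ne (Ne.symm hmn)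
    have hcc : d * Complex.I ≠ 0 := mul_ne_zero hdne Complex.I_ne_zero
    have hpt : ∀ p : ℝ × ℝ, p.1 • F (Complex.polarCoord.symm p)
        = (fun r : ℝ => ((r : ℂ) * ((c * Real.exp (-b * r ^ 2) : ℝ) : ℂ) * (r : ℂ) ^ (m + n))) p.1
          * (fun θ : ℝ => Complex.exp (d * Complex.I * (θ : ℂ))) p.2 := by
      rintro ⟨r, θ⟩
      have habs : ‖Complex.polarCoord.symm (r, θ)‖ = |r| :=
        Complex.norm_polarCoord_symm _
      have hsymm : Complex.polarCoord.symm (r, θ) = (r : ℂ) * Complex.exp ((θ : ℂ) * Complex.I) := by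
        rw [Complex.polarCoord_symm_apply, Complex.exp_mul_I, Complex.ofReal_cos,
          Complex.ofReal_sin]
      have hconj : (starRingEnd ℂ) (Complex.polarCoord.symm (r, θ))
          = (r : ℂ) * Complex.exp (-((θ : ℂ) * Complex.I)) := by
        rw [hsymm, map_mul, Complex.conj_ofReal, ← Complex.exp_conj, map_mul,
          Complex.conj_ofReal, Complex.conj_I, mul_neg]
      rw [hF]
      simp only
      have harg : (m : ℂ) * -((θ:ℂ) * Complex.I) + (n : ℂ) * ((θ:ℂ) * Complex.I)
          = d * Complex.I * (θ:ℂ) := by rw [hd]; ring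
      rw [habs, hconj, hsymm, sq_abs, mul_pow, mul_pow, ← Complex.exp_nat_mul,
        ← Complex.exp_nat_mul, Complex.real_smul, ← harg, Complex.exp_add, pow_add]
      ring
    calc ∫ p in polarCoord.target, p.1 • F (Complex.polarCoord.symm p)
        = ∫ p in polarCoord.target,
            (fun r : ℝ => ((r : ℂ) * ((c * Real.exp (-b * r ^ 2) : ℝ) : ℂ) * (r : ℂ) ^ (m + n))) p.1
            * (fun θ : ℝ => Complex.exp (d * Complex.I * (θ : ℂ))) p.2 :=
          integral_congr_ae (Filter.Eventually.of_forall fun p => hpt p)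
      _ = (∫ r in Set.Ioi (0:ℝ), ((r : ℂ) * ((c * Real.exp (-b * r ^ 2) : ℝ) : ℂ) * (r : ℂ) ^ (m + n)))
            * ∫ θ in Set.Ioo (-π) π, Complex.exp (d * Complex.I * (θ : ℂ)) := by
          rw [polarCoord_target, Measure.volume_eq_prod]
          exact setIntegral_prod_mul
            (fun r : ℝ => ((r : ℂ) * ((c * Real.exp (-b * r ^ 2) : ℝ) : ℂ) * (r : ℂ) ^ (m + n)))
            (fun θ : ℝ => Complex.exp (d * Complex.I * (θ : ℂ))) _ _
      _ = 0 := by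
          have hang : ∫ θ in Set.Ioo (-π) π, Complex.exp (d * Complex.I * (θ : ℂ)) = 0 := by
            rw [← integral_Ioc_eq_integral_Ioo,
              ← intervalIntegral.integral_of_le (by linarith [Real.pi_pos] : -π ≤ π),
              integral_exp_mul_complex hcc]
            have : d * Complex.I * (π : ℂ)
                = d * Complex.I * ((-π : ℝ) : ℂ)
                  + ((((n : ℤ) - (m : ℤ)) : ℤ) : ℂ) * (2 * (π:ℂ) * Complex.I) := by
              rw [hd]; push_cast; ring
            rw [this, Complex.exp_add, Complex.exp_int_mul_two_pi_mul_I, mul_one, sub_self,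
              zero_div]
          rw [hang, mul_zero]

lemma pi_integral {S : Finset ℕ} (ms : ℕ → Measure ℂ) [∀ j, SigmaFinite (ms j)]
    (f : ℕ → ℂ → ℂ) :
    ∫ y : S → ℂ, ∏ j : S, f j (y j) ∂(Measure.pi fun j : S => ms j)
      = ∏ j : S, ∫ s, f j s ∂(ms j) :=
  MeasureTheory.integral_fintype_prod_eq_prod (ι := S) (E := fun _ => ℂ) (fun j s => f j s)

theorem stmt4 (k : ℕ → ℝ) (hk : ∀ j, 0 < k j)
    (μs : ℕ → Measure ℂ)
    (hμs : ∀ j, μs j = volume.withDensity fun s =>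
      ENNReal.ofReal ((π * k j ^ 2)⁻¹ * Real.exp (-(‖s‖ ^ 2) / k j ^ 2)))
    [∀ j, IsProbabilityMeasure (μs j)]
    (μ : Measure (ℕ → ℂ)) [IsProbabilityMeasure μ]
    (hμ : IsProjectiveLimit μ fun J : Finset ℕ => Measure.pi fun j : J => μs j)
    (I J : ℕ →₀ ℕ) :
    (I ≠ J → ∫ x, (starRingEnd ℂ) (zmon I x) * zmon J x ∂μ = 0) ∧
    ∫ x, ‖zmon I x‖ ^ 2 ∂μ =
      (mfact I : ℝ) * ∏ j ∈ I.support, k j ^ (2 * I j) := by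
  classical
  have core : ∀ I' J' : ℕ →₀ ℕ, ∫ x, (starRingEnd ℂ) (zmon I' x) * zmon J' x ∂μ
      = if I' = J'
        then ((((mfact I' : ℝ) * ∏ j ∈ I'.support, k j ^ (2 * I' j)) : ℝ) : ℂ) else 0 := by
    intro I' J'
    set S : Finset ℕ := I'.support ∪ J'.support with hS
    have hzI : ∀ x : ℕ → ℂ, zmon I' x = ∏ j ∈ S, x j ^ I' j := fun x =>
      Finset.prod_subset Finset.subset_union_left fun j _ hj => by
        rw [Finsupp.notMem_support_iff.mp hj, pow_zero]
    have hzJ : ∀ x : ℕ → ℂ, zmon J' x = ∏ j ∈ S, x j ^ J' j := fun x =>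
      Finset.prod_subset Finset.subset_union_right fun j _ hj => by
        rw [Finsupp.notMem_support_iff.mp hj, pow_zero]
    have hrw0 : ∀ x : ℕ → ℂ, (starRingEnd ℂ) (zmon I' x) * zmon J' x
        = ∏ j ∈ S, ((starRingEnd ℂ) (x j) ^ I' j * (x j) ^ J' j) := by
      intro x
      rw [hzI x, hzJ x, map_prod, ← Finset.prod_mul_distrib]
      exact Finset.prod_congr rfl fun j _ => by rw [map_pow]
    have hrw : ∀ x : ℕ → ℂ, (starRingEnd ℂ) (zmon I' x) * zmon J' x
        = (fun y : S → ℂ => ∏ j : S, ((starRingEnd ℂ) (y j) ^ I' j * (y j) ^ J' j))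
            (S.restrict x) := by
      intro x
      rw [hrw0 x]
      exact (Finset.prod_coe_sort S
        (fun j => (starRingEnd ℂ) (x j) ^ I' j * (x j) ^ J' j)).symm
    have hfm : Measurable
        (fun y : S → ℂ => ∏ j : S, ((starRingEnd ℂ) (y j) ^ I' j * (y j) ^ J' j)) := by
      apply Finset.measurable_prod
      intro j _
      have h1 : Measurable fun y : S → ℂ => y j := measurable_pi_apply j
      have h2 : Measurable fun y : S → ℂ => (starRingEnd ℂ) (y j) :=
        RCLike.continuous_conj.measurable.comp h1
      exact (h2.pow_const _).mul (h1.pow_const _)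
    have hfac : ∀ j : S, ∫ s, (starRingEnd ℂ) s ^ I' (j : ℕ) * s ^ J' (j : ℕ) ∂(μs j)
        = if I' (j : ℕ) = J' (j : ℕ)
          then ((((J' (j : ℕ)).factorial : ℝ) * k j ^ (2 * J' (j : ℕ)) : ℝ) : ℂ) else 0 := by
      intro j
      rw [show μs (j : ℕ) = gmeasure (k j) from hμs j]
      exact gauss_moment (hk j) _ _
    have hmain : ∫ x, (starRingEnd ℂ) (zmon I' x) * zmon J' x ∂μ
        = ∏ j : S, ∫ s, (starRingEnd ℂ) s ^ I' (j : ℕ) * s ^ J' (j : ℕ) ∂(μs j) := by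
      calc ∫ x, (starRingEnd ℂ) (zmon I' x) * zmon J' x ∂μ
          = ∫ x, (fun y : S → ℂ => ∏ j : S, ((starRingEnd ℂ) (y j) ^ I' j * (y j) ^ J' j))
              (S.restrict x) ∂μ :=
            integral_congr_ae (Filter.Eventually.of_forall fun x => hrw x)
        _ = ∫ y, ∏ j : S, ((starRingEnd ℂ) (y j) ^ I' j * (y j) ^ J' j)
              ∂(μ.map S.restrict) :=
            by rw [integral_map (S.measurable_restrict).aemeasurable
              hfm.aestronglyMeasurable]
        _ = ∫ y, ∏ j : S, ((starRingEnd ℂ) (y j) ^ I' j * (y j) ^ J' j)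
              ∂(Measure.pi fun j : S => μs j) := by rw [hμ S]
        _ = ∏ j : S, ∫ s, (starRingEnd ℂ) s ^ I' (j : ℕ) * s ^ J' (j : ℕ) ∂(μs j) :=
            pi_integral μs fun j s => (starRingEnd ℂ) s ^ I' j * s ^ J' j
    rw [hmain]
    rcases eq_or_ne I' J' with rfl | hne
    · rw [if_pos rfl]
      have hSS : S = I'.support := by rw [hS, Finset.union_self]
      simp only [hfac, eq_self_iff_true, if_true]
      rw [Finset.prod_coe_sort S
        (fun j => ((((I' j).factorial : ℝ) * k j ^ (2 * I' j) : ℝ) : ℂ)), hSS]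
      rw [← Complex.ofReal_prod, Complex.ofReal_inj, Finset.prod_mul_distrib]
      congr 1
      rw [show mfact I' = ∏ j ∈ I'.support, (I' j).factorial from rfl]
      push_cast
      rfl
    · rw [if_neg hne]
      obtain ⟨j0, hj0⟩ := Finsupp.ne_iff.mp hne
      have hj0S : j0 ∈ S := by
        rw [hS, Finset.mem_union]
        rcases eq_or_ne (I' j0) 0 with h0 | h0
        · exact Or.inr (Finsupp.mem_support_iff.mpr fun h => hj0 (h0.trans h.symm))
        · exact Or.inl (Finsupp.mem_support_iff.mpr h0)
      refine Finset.prod_eq_zero (Finset.mem_univ (⟨j0, hj0S⟩ : S)) ?_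
      rw [hfac ⟨j0, hj0S⟩, if_neg hj0]
  constructor
  · intro hne
    rw [core I J, if_neg hne]
  · have h := core I I
    rw [if_pos rfl] at h
    have h2 : ∀ x, (((‖zmon I x‖ ^ 2 : ℝ)) : ℂ)
        = (starRingEnd ℂ) (zmon I x) * zmon I x := fun x => by
      rw [Complex.sq_norm, Complex.normSq_eq_conj_mul_self]
    apply Complex.ofReal_injective
    calc ((∫ x, ‖zmon I x‖ ^ 2 ∂μ : ℝ) : ℂ)
        = ∫ x, ((‖zmon I x‖ ^ 2 : ℝ) : ℂ) ∂μ := integral_ofReal.symm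
      _ = ∫ x, (starRingEnd ℂ) (zmon I x) * zmon I x ∂μ :=
          integral_congr_ae (Filter.Eventually.of_forall fun x => h2 x)
      _ = _ := by rw [h]
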